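/- Let d ≥ 1. There exists a constant c = c(d) > 0 such that for every λ' ≥ 0, every t > 0 and all x, y ∈ ℝ^d, ∫_{ℝ^d} |p_t(x−w) − p_t(y−w)| e^{λ'|w|} dw ≤ c e^{(λ')² t} e^{λ'|x| + 2λ'|x−y|} t^{-1/2} |x−y|. -/

import Mathlib

set_option synthInstance.maxHeartbeats 1000000
set_option maxHeartbeats 1000000


open Real MeasureTheory

/-- The `d`-dimensional heat kernel `p_t(x) = (2πt)^{-d/2} exp(-|x|²/(2t))`. -/
noncomputable def heatKernel (d : ℕ) (t : ℝ) (x : EuclideanSpace ℝ (Fin d)) : ℝ :=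
  (2 * Real.pi * t) ^ (-(d : ℝ) / 2) * Real.exp (-‖x‖ ^ 2 / (2 * t))

section aux
variable {d : ℕ}

local notation "E" => EuclideanSpace ℝ (Fin d)

lemma gauss_integrable {b : ℝ} (hb : 0 < b) :
    Integrable (fun v : E ↦ Real.exp (-b * ‖v‖^2)) := by
  have := (GaussianFourier.integrable_cexp_neg_mul_sq_norm_add (V := E)
    (b := (b:ℂ)) (by simpa using hb) 0 0).norm
  simp only [Complex.norm_exp, zero_mul, add_zero, ← Complex.ofReal_pow,
    ← Complex.ofReal_neg, ← Complex.ofReal_mul, Complex.ofReal_re] at this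
  exact this

lemma gauss_integral {b : ℝ} (hb : 0 < b) :
    ∫ v : E, Real.exp (-b * ‖v‖^2) = (π/b)^((d:ℝ)/2) := by
  rw [GaussianFourier.integral_rexp_neg_mul_sq_norm hb]
  simp

lemma gauss_shift_integrable {b : ℝ} (hb : 0 < b) (x : E) :
    Integrable (fun w : E ↦ Real.exp (-b * ‖x - w‖^2)) :=
  (gauss_integrable hb).comp_sub_left x

lemma gauss_shift_integral {b : ℝ} (hb : 0 < b) (x : E) :
    ∫ w : E, Real.exp (-b * ‖x - w‖^2) = (π/b)^((d:ℝ)/2) := by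
  rw [integral_sub_left_eq_self (fun u : E ↦ Real.exp (-b * ‖u‖^2)) volume x]
  exact gauss_integral hb

lemma heatKernel_hasFDerivAt {t : ℝ} (z : E) :
    HasFDerivAt (heatKernel d t)
      (((2*π*t) ^ (-(d:ℝ)/2)) • ((Real.exp (-‖z‖^2/(2*t))) •
        ((-(1/(2*t))) • (2 • (innerSL ℝ z))))) z := by
  have h1 : HasFDerivAt (fun z : E => ‖z‖^2) (2 • innerSL ℝ z) z :=
    (hasStrictFDerivAt_norm_sq z).hasFDerivAt
  have h2 : HasFDerivAt (fun z : E => -‖z‖^2/(2*t)) ((-(1/(2*t))) • (2 • innerSL ℝ z)) z := by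
    have heq : (fun z : E => -‖z‖^2/(2*t)) = fun z : E => (-(1/(2*t))) * ‖z‖^2 := by
      funext z; ring
    rw [heq]
    exact h1.const_mul _
  exact h2.exp.const_mul _

lemma norm_heatKernel_fderiv {t : ℝ} (ht : 0 < t) (z : E) :
    ‖((2*π*t) ^ (-(d:ℝ)/2) : ℝ) • ((Real.exp (-‖z‖^2/(2*t))) •
        ((-(1/(2*t))) • (2 • (innerSL ℝ z))))‖
      = (2*π*t) ^ (-(d:ℝ)/2) * Real.exp (-‖z‖^2/(2*t)) * ‖z‖ / t := by
  have h2 : ((2*π*t) ^ (-(d:ℝ)/2) : ℝ) • ((Real.exp (-‖z‖^2/(2*t))) •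
        ((-(1/(2*t))) • (2 • (innerSL ℝ z))))
      = ((2*π*t) ^ (-(d:ℝ)/2) * Real.exp (-‖z‖^2/(2*t)) * (-(1/(2*t))) * 2) • innerSL ℝ z := by
    rw [← Nat.cast_smul_eq_nsmul ℝ 2 (innerSL ℝ z)]
    rw [smul_smul, smul_smul, smul_smul]
    norm_num
  rw [h2, norm_smul _ (innerSL ℝ z), innerSL_apply_norm, Real.norm_eq_abs]
  have hc : (0:ℝ) < (2*π*t) ^ (-(d:ℝ)/2) := by positivity
  rw [abs_mul, abs_mul, abs_mul, abs_of_pos hc, abs_of_pos (Real.exp_pos _), abs_neg,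
    abs_of_pos (by positivity : (0:ℝ) < 1/(2*t)), abs_of_pos (by norm_num : (0:ℝ) < 2)]
  field_simp

lemma tpow_half {t : ℝ} (ht : 0 < t) : t ^ (-(1:ℝ)/2) = (Real.sqrt t)⁻¹ := by
  rw [show (-(1:ℝ)/2) = -(1/2) by norm_num, Real.rpow_neg ht.le, ← Real.sqrt_eq_rpow]

lemma sq_lower {s A δ : ℝ} (hs : 0 ≤ s) (hA : 0 ≤ A) (hδ : 0 ≤ δ)
    (hlow : A - δ ≤ s) : A^2 - 2*δ*A ≤ s^2 := by
  rcases le_total A δ with h | h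
  · nlinarith [sq_nonneg s, mul_nonneg hA (sub_nonneg.mpr h)]
  · nlinarith [mul_self_le_mul_self (by linarith : (0:ℝ) ≤ A - δ) hlow, sq_nonneg δ]

lemma scalar1 {t s A δ : ℝ} (ht : 0 < t) (hs : 0 ≤ s) (hA : 0 ≤ A) (hδ : 0 ≤ δ)
    (hlow : A - δ ≤ s) :
    Real.exp (-s^2/(2*t)) * s / t
      ≤ 3 * t^(-(1:ℝ)/2) * Real.exp ((-9*A^2 + 18*δ*A)/(20*t)) := by
  have hst : 0 < Real.sqrt t := Real.sqrt_pos.mpr ht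
  have hrt : Real.sqrt t ^ 2 = t := Real.sq_sqrt ht.le
  have key : s ≤ 3 * Real.sqrt t * Real.exp (s^2/(20*t)) := by
    have h1 : s^2/(20*t) + 1 ≤ Real.exp (s^2/(20*t)) := Real.add_one_le_exp _
    have h2 : s ≤ 3 * Real.sqrt t * (s^2/(20*t) + 1) := by
      have heq : 3 * Real.sqrt t * (s^2/(20*t) + 1)
          = (3*s^2 + 60 * t) / (20*Real.sqrt t) := by
        field_simp
        linear_combination (3*s^2+60*t) * hrt
      rw [heq, le_div_iff₀ (by positivity)]
      nlinarith [sq_nonneg (3*s - 10*Real.sqrt t), hrt]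
    have h3 := mul_le_mul_of_nonneg_left h1 (by positivity : (0:ℝ) ≤ 3 * Real.sqrt t)
    linarith
  have hsq := sq_lower hs hA hδ hlow
  calc Real.exp (-s^2/(2*t)) * s / t
      ≤ Real.exp (-s^2/(2*t)) * (3 * Real.sqrt t * Real.exp (s^2/(20*t))) / t := by
        gcongr
    _ = 3 * (Real.sqrt t / t) * Real.exp (-s^2/(2*t) + s^2/(20*t)) := by
        rw [Real.exp_add]; ring
    _ = 3 * t^(-(1:ℝ)/2) * Real.exp (-9*s^2/(20*t)) := by
        rw [tpow_half ht]
        congr 1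
        · congr 1
          rw [← hrt]; field_simp; rw [Real.sqrt_sq hst.le]
        · congr 1; field_simp; ring
    _ ≤ 3 * t^(-(1:ℝ)/2) * Real.exp ((-9*A^2 + 18*δ*A)/(20*t)) := by
        have h4 : -9*s^2/(20*t) ≤ (-9*A^2 + 18*δ*A)/(20*t) := by
          exact (div_le_div_iff_of_pos_right (by positivity)).mpr (by linarith)
        have := Real.exp_le_exp.mpr h4
        have h5 : (0:ℝ) ≤ 3 * t^(-(1:ℝ)/2) := by positivity
        nlinarith [this, h5, Real.exp_pos (-9*s^2/(20*t))]


lemma heatKernel_diff_bound {t : ℝ} (ht : 0 < t) (x y w : E) :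
    |heatKernel d t (x - w) - heatKernel d t (y - w)|
      ≤ ‖x - y‖ * (3 * t^(-(1:ℝ)/2) * (2*π*t) ^ (-(d:ℝ)/2) *
          Real.exp ((-9*‖x - w‖^2 + 18*‖x - y‖*‖x - w‖)/(20*t))) := by
  set M : ℝ := 3 * t^(-(1:ℝ)/2) * (2*π*t) ^ (-(d:ℝ)/2) *
      Real.exp ((-9*‖x - w‖^2 + 18*‖x - y‖*‖x - w‖)/(20*t)) with hM
  have bound : ∀ z ∈ segment ℝ (x - w) (y - w),
      ‖((2*π*t) ^ (-(d:ℝ)/2) : ℝ) • ((Real.exp (-‖z‖^2/(2*t))) •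
        ((-(1/(2*t))) • (2 • (innerSL ℝ z))))‖ ≤ M := by
    rintro z ⟨u, v, hu, hv, huv, hz⟩
    rw [norm_heatKernel_fderiv ht z]
    have hz2 : (x - w) - z = v • (x - y) := by
      rw [← hz, show u = 1 - v from by linarith]
      module
    have hnz : ‖(x - w) - z‖ ≤ ‖x - y‖ := by
      rw [hz2, norm_smul, Real.norm_eq_abs, abs_of_nonneg hv]
      nlinarith [norm_nonneg (x - y)]
    have hlow : ‖x - w‖ - ‖x - y‖ ≤ ‖z‖ := by
      have h1 : ‖x - w‖ ≤ ‖(x - w) - z‖ + ‖z‖ := by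
        simpa using norm_add_le ((x - w) - z) z
      linarith
    have hs1 := scalar1 (s := ‖z‖) (A := ‖x - w‖) (δ := ‖x - y‖) ht
      (norm_nonneg _) (norm_nonneg _) (norm_nonneg _) hlow
    rw [hM]
    calc (2*π*t) ^ (-(d:ℝ)/2) * Real.exp (-‖z‖^2/(2*t)) * ‖z‖ / t
        = (2*π*t) ^ (-(d:ℝ)/2) * (Real.exp (-‖z‖^2/(2*t)) * ‖z‖ / t) := by ring
      _ ≤ (2*π*t) ^ (-(d:ℝ)/2) *
          (3 * t^(-(1:ℝ)/2) * Real.exp ((-9*‖x - w‖^2 + 18*‖x - y‖*‖x - w‖)/(20*t))) := by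
          gcongr
      _ = M := by rw [hM]; ring
  have hmvt := (convex_segment (x - w) (y - w)).norm_image_sub_le_of_norm_hasFDerivWithin_le
    (fun z _ => (heatKernel_hasFDerivAt z).hasFDerivWithinAt) bound
    (right_mem_segment ℝ _ _) (left_mem_segment ℝ _ _)
  have heq : (x - w) - (y - w) = x - y := by abel
  rw [heq] at hmvt
  rw [show |heatKernel d t (x - w) - heatKernel d t (y - w)|
      = ‖heatKernel d t (x - w) - heatKernel d t (y - w)‖ from rfl] at *
  calc ‖heatKernel d t (x - w) - heatKernel d t (y - w)‖ ≤ M * ‖x - y‖ := hmvt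
    _ = ‖x - y‖ * M := by ring

lemma scalar2 {t δ A lam : ℝ} (ht : 0 < t) (hδ : 0 ≤ δ) (hδt : δ^2 ≤ t) (hA : 0 ≤ A)
    (hl : 0 ≤ lam) :
    (-9*A^2 + 18*δ*A)/(20*t) + lam*A ≤ 9/5 + lam^2*t + -(7/(80*t))*A^2 := by
  have h20 : (0:ℝ) < 20*t := by positivity
  have key : (-9*A^2 + 18*δ*A) + (lam*A)*(20*t)
      ≤ (9/5 + lam^2*t)*(20*t) + (-(7/(80*t))*A^2)*(20*t) := by
    have he : (-(7/(80*t))*A^2)*(20*t) = -(7/4)*A^2 := by field_simp; ring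
    rw [he]
    nlinarith [sq_nonneg (A - 4*δ), sq_nonneg (A - 2*lam*t), hδt, ht.le,
      mul_nonneg hl ht.le]
  calc (-9*A^2 + 18*δ*A)/(20*t) + lam*A
      = ((-9*A^2 + 18*δ*A) + (lam*A)*(20*t))/(20*t) := by field_simp
    _ ≤ ((9/5 + lam^2*t)*(20*t) + (-(7/(80*t))*A^2)*(20*t))/(20*t) :=
        (div_le_div_iff_of_pos_right h20).mpr key
    _ = 9/5 + lam^2*t + -(7/(80*t))*A^2 := by field_simp

lemma scalar3 {t A lam : ℝ} (ht : 0 < t) :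
    -A^2/(2*t) + lam*A ≤ lam^2*t + -(1/(4*t))*A^2 := by
  have h4 : (0:ℝ) < 4*t := by positivity
  have key : -A^2*2 + (lam*A)*(4*t) ≤ (lam^2*t)*(4*t) + (-(1/(4*t))*A^2)*(4*t) := by
    have he : (-(1/(4*t))*A^2)*(4*t) = -A^2 := by field_simp
    rw [he]
    nlinarith [sq_nonneg (A - 2*lam*t)]
  calc -A^2/(2*t) + lam*A = (-A^2*2 + (lam*A)*(4*t))/(4*t) := by field_simp; ring
    _ ≤ ((lam^2*t)*(4*t) + (-(1/(4*t))*A^2)*(4*t))/(4*t) := (div_le_div_iff_of_pos_right h4).mpr key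
    _ = lam^2*t + -(1/(4*t))*A^2 := by field_simp

lemma heatKernel_nonneg {t : ℝ} (ht : 0 < t) (z : E) : 0 ≤ heatKernel d t z := by
  rw [heatKernel]; positivity

lemma rpow_const_bound {t Q : ℝ} (ht : 0 < t) (hQ : 0 ≤ Q) (hQ36 : Q/(2*π*t) ≤ 36) :
    (2*π*t) ^ (-(d:ℝ)/2) * Q^((d:ℝ)/2) ≤ 6^d := by
  have hpt : (0:ℝ) < 2*π*t := by positivity
  have h1 : (2*π*t) ^ (-(d:ℝ)/2) * Q^((d:ℝ)/2) = (Q/(2*π*t))^((d:ℝ)/2) := by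
    rw [Real.div_rpow hQ hpt.le, show (-(d:ℝ)/2) = -((d:ℝ)/2) by ring,
      Real.rpow_neg hpt.le]
    rw [inv_mul_eq_div]
  rw [h1]
  calc (Q/(2*π*t))^((d:ℝ)/2) ≤ (36:ℝ)^((d:ℝ)/2) :=
        Real.rpow_le_rpow (by positivity) hQ36 (by positivity)
    _ = 6^d := by
      rw [show (36:ℝ) = (6:ℝ)^((2:ℕ):ℝ) by rw [Real.rpow_natCast]; norm_num,
        ← Real.rpow_mul (by norm_num : (0:ℝ) ≤ 6),
        show ((2:ℕ):ℝ)*((d:ℝ)/2) = (d:ℝ) by push_cast; ring, Real.rpow_natCast]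

end aux

/-- There is `c = c(d) > 0` such that for every `λ' ≥ 0`, `t > 0` and
`x, y ∈ ℝ^d`,
`∫ |p_t(x−w) − p_t(y−w)| e^{λ'|w|} dw ≤ c e^{λ'²t} e^{λ'|x| + 2λ'|x−y|} t^{-1/2} |x−y|`. -/
theorem heatKernel_space_difference_L1_bound
    (d : ℕ) (hd : 1 ≤ d) :
    ∃ c : ℝ, 0 < c ∧ ∀ (lam : ℝ), 0 ≤ lam → ∀ (t : ℝ), 0 < t →
      ∀ (x y : EuclideanSpace ℝ (Fin d)),
      (∫ w : EuclideanSpace ℝ (Fin d),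
          |heatKernel d t (x - w) - heatKernel d t (y - w)| * Real.exp (lam * ‖w‖))
        ≤ c * Real.exp (lam ^ 2 * t) * Real.exp (lam * ‖x‖ + 2 * lam * ‖x - y‖) *
            t ^ (-(1 : ℝ) / 2) * ‖x - y‖ := by
  refine ⟨3 * Real.exp 2 * 6^d, by positivity, ?_⟩
  intro lam hlam t ht x y
  have hδ : (0:ℝ) ≤ ‖x - y‖ := norm_nonneg _
  have hEx : Real.exp (lam * ‖x‖) ≤ Real.exp (lam * ‖x‖ + 2 * lam * ‖x - y‖) := by
    apply Real.exp_le_exp.mpr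
    nlinarith [mul_nonneg hlam hδ]
  by_cases hcase : ‖x - y‖^2 ≤ t
  · -- close case: use gradient bound
    set K : ℝ := 3 * Real.exp (9/5) * Real.exp (lam^2*t) * Real.exp (lam*‖x‖) *
      (t^(-(1:ℝ)/2) * ‖x - y‖) * (2*π*t)^(-(d:ℝ)/2) with hK
    have hb : (0:ℝ) < 7/(80*t) := by positivity
    have hpt : ∀ w : EuclideanSpace ℝ (Fin d),
        |heatKernel d t (x - w) - heatKernel d t (y - w)| * Real.exp (lam * ‖w‖)
          ≤ K * Real.exp (-(7/(80*t)) * ‖x - w‖^2) := by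
      intro w
      have h1 := heatKernel_diff_bound ht x y w
      have hwx : ‖w‖ ≤ ‖x‖ + ‖x - w‖ := by simpa using norm_sub_le x (x - w)
      have h2 : Real.exp (lam * ‖w‖) ≤ Real.exp (lam*‖x‖ + lam*‖x - w‖) := by
        apply Real.exp_le_exp.mpr
        nlinarith [mul_le_mul_of_nonneg_left hwx hlam]
      have h3 := mul_le_mul h1 h2 (Real.exp_pos _).le (by positivity)
      refine h3.trans ?_
      have hs2 := scalar2 (δ := ‖x - y‖) (A := ‖x - w‖) ht hδ hcase (norm_nonneg _) hlam
      have hprod : Real.exp ((-9*‖x - w‖^2 + 18*‖x - y‖*‖x - w‖)/(20*t)) *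
            Real.exp (lam*‖x‖ + lam*‖x - w‖)
          ≤ Real.exp (9/5) * Real.exp (lam^2*t) * Real.exp (lam*‖x‖) *
            Real.exp (-(7/(80*t))*‖x - w‖^2) := by
        rw [← Real.exp_add, ← Real.exp_add, ← Real.exp_add, ← Real.exp_add]
        exact Real.exp_le_exp.mpr (by linarith [hs2])
      calc ‖x - y‖ * (3 * t^(-(1:ℝ)/2) * (2*π*t) ^ (-(d:ℝ)/2) *
              Real.exp ((-9*‖x - w‖^2 + 18*‖x - y‖*‖x - w‖)/(20*t)))
            * Real.exp (lam*‖x‖ + lam*‖x - w‖)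
          = (3 * ‖x - y‖ * t^(-(1:ℝ)/2) * (2*π*t)^(-(d:ℝ)/2)) *
              (Real.exp ((-9*‖x - w‖^2 + 18*‖x - y‖*‖x - w‖)/(20*t)) *
                Real.exp (lam*‖x‖ + lam*‖x - w‖)) := by ring
        _ ≤ (3 * ‖x - y‖ * t^(-(1:ℝ)/2) * (2*π*t)^(-(d:ℝ)/2)) *
              (Real.exp (9/5) * Real.exp (lam^2*t) * Real.exp (lam*‖x‖) *
                Real.exp (-(7/(80*t))*‖x - w‖^2)) :=
            mul_le_mul_of_nonneg_left hprod (by positivity)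
        _ = K * Real.exp (-(7/(80*t)) * ‖x - w‖^2) := by rw [hK]; ring
    have hint : Integrable (fun w : EuclideanSpace ℝ (Fin d) =>
        K * Real.exp (-(7/(80*t)) * ‖x - w‖^2)) := (gauss_shift_integrable hb x).const_mul K
    calc (∫ w : EuclideanSpace ℝ (Fin d),
            |heatKernel d t (x - w) - heatKernel d t (y - w)| * Real.exp (lam * ‖w‖))
        ≤ ∫ w : EuclideanSpace ℝ (Fin d), K * Real.exp (-(7/(80*t)) * ‖x - w‖^2) :=
          integral_mono_of_nonneg (Filter.Eventually.of_forall fun w => by positivity) hint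
            (Filter.Eventually.of_forall hpt)
      _ = K * (π/(7/(80*t)))^((d:ℝ)/2) := by
          rw [integral_const_mul, gauss_shift_integral hb x]
      _ ≤ 3 * Real.exp 2 * 6^d * Real.exp (lam ^ 2 * t) *
            Real.exp (lam * ‖x‖ + 2 * lam * ‖x - y‖) * t ^ (-(1 : ℝ) / 2) * ‖x - y‖ := by
          have hQ : (0:ℝ) ≤ π/(7/(80*t)) := by positivity
          have hQ36 : (π/(7/(80*t)))/(2*π*t) ≤ 36 := by
            have : (π/(7/(80*t)))/(2*π*t) = 40/7 := by
              field_simp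
              ring
            rw [this]; norm_num
          have hc6 := rpow_const_bound (d := d) ht hQ hQ36
          have hexp95 : Real.exp (9/5) ≤ Real.exp 2 := Real.exp_le_exp.mpr (by norm_num)
          calc K * (π/(7/(80*t)))^((d:ℝ)/2)
              = 3 * Real.exp (9/5) * ((2*π*t)^(-(d:ℝ)/2) * (π/(7/(80*t)))^((d:ℝ)/2)) *
                  Real.exp (lam^2*t) * Real.exp (lam*‖x‖) * t^(-(1:ℝ)/2) * ‖x - y‖ := by
                rw [hK]; ring
            _ ≤ 3 * Real.exp 2 * (6^d) * Real.exp (lam^2*t) *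
                  Real.exp (lam * ‖x‖ + 2 * lam * ‖x - y‖) * t^(-(1:ℝ)/2) * ‖x - y‖ := by
                gcongr
            _ = 3 * Real.exp 2 * 6^d * Real.exp (lam ^ 2 * t) *
                  Real.exp (lam * ‖x‖ + 2 * lam * ‖x - y‖) * t ^ (-(1 : ℝ) / 2) * ‖x - y‖ := by
                ring
  · -- far case: triangle inequality
    have hlt : t < ‖x - y‖^2 := not_le.mp hcase
    have hone : 1 ≤ t^(-(1:ℝ)/2) * ‖x - y‖ := by
      rw [tpow_half ht]
      have hst : 0 < Real.sqrt t := Real.sqrt_pos.mpr ht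
      have h1 : Real.sqrt t ≤ ‖x - y‖ := by
        have h2 := Real.sqrt_le_sqrt hlt.le
        rwa [Real.sqrt_sq (norm_nonneg _)] at h2
      calc (1:ℝ) = (Real.sqrt t)⁻¹ * Real.sqrt t := by field_simp
        _ ≤ (Real.sqrt t)⁻¹ * ‖x - y‖ := by gcongr
    have hb4 : (0:ℝ) < 1/(4*t) := by positivity
    have hker : ∀ (ξ : EuclideanSpace ℝ (Fin d)) (w : EuclideanSpace ℝ (Fin d)),
        heatKernel d t (ξ - w) * Real.exp (lam * ‖w‖)
          ≤ (2*π*t)^(-(d:ℝ)/2) * Real.exp (lam^2*t) *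
            (Real.exp (lam*‖ξ‖) * Real.exp (-(1/(4*t)) * ‖ξ - w‖^2)) := by
      intro ξ w
      have hwx : ‖w‖ ≤ ‖ξ‖ + ‖ξ - w‖ := by simpa using norm_sub_le ξ (ξ - w)
      have h2 : Real.exp (lam * ‖w‖) ≤ Real.exp (lam*‖ξ‖ + lam*‖ξ - w‖) := by
        apply Real.exp_le_exp.mpr
        nlinarith [mul_le_mul_of_nonneg_left hwx hlam]
      have hs3 := scalar3 (A := ‖ξ - w‖) (lam := lam) ht
      have hprod : Real.exp (-‖ξ - w‖^2/(2*t)) * Real.exp (lam*‖ξ‖ + lam*‖ξ - w‖)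
          ≤ Real.exp (lam^2*t) * (Real.exp (lam*‖ξ‖) * Real.exp (-(1/(4*t)) * ‖ξ - w‖^2)) := by
        rw [← Real.exp_add, ← Real.exp_add, ← Real.exp_add]
        exact Real.exp_le_exp.mpr (by linarith [hs3])
      rw [heatKernel]
      calc (2*π*t)^(-(d:ℝ)/2) * Real.exp (-‖ξ - w‖^2/(2*t)) * Real.exp (lam * ‖w‖)
          ≤ (2*π*t)^(-(d:ℝ)/2) * Real.exp (-‖ξ - w‖^2/(2*t)) *
              Real.exp (lam*‖ξ‖ + lam*‖ξ - w‖) := by gcongr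
        _ = (2*π*t)^(-(d:ℝ)/2) * (Real.exp (-‖ξ - w‖^2/(2*t)) *
              Real.exp (lam*‖ξ‖ + lam*‖ξ - w‖)) := by ring
        _ ≤ (2*π*t)^(-(d:ℝ)/2) * (Real.exp (lam^2*t) *
              (Real.exp (lam*‖ξ‖) * Real.exp (-(1/(4*t)) * ‖ξ - w‖^2))) :=
            mul_le_mul_of_nonneg_left hprod (by positivity)
        _ = (2*π*t)^(-(d:ℝ)/2) * Real.exp (lam^2*t) *
              (Real.exp (lam*‖ξ‖) * Real.exp (-(1/(4*t)) * ‖ξ - w‖^2)) := by ring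
    have hpt : ∀ w : EuclideanSpace ℝ (Fin d),
        |heatKernel d t (x - w) - heatKernel d t (y - w)| * Real.exp (lam * ‖w‖)
          ≤ (2*π*t)^(-(d:ℝ)/2) * Real.exp (lam^2*t) *
            (Real.exp (lam*‖x‖) * Real.exp (-(1/(4*t)) * ‖x - w‖^2) +
             Real.exp (lam*‖y‖) * Real.exp (-(1/(4*t)) * ‖y - w‖^2)) := by
      intro w
      have habs : |heatKernel d t (x - w) - heatKernel d t (y - w)|
          ≤ heatKernel d t (x - w) + heatKernel d t (y - w) := by
        rw [abs_sub_le_iff]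
        constructor
        · linarith [heatKernel_nonneg (d := d) ht (y - w)]
        · linarith [heatKernel_nonneg (d := d) ht (x - w)]
      calc |heatKernel d t (x - w) - heatKernel d t (y - w)| * Real.exp (lam * ‖w‖)
          ≤ (heatKernel d t (x - w) + heatKernel d t (y - w)) * Real.exp (lam * ‖w‖) :=
            mul_le_mul_of_nonneg_right habs (Real.exp_pos _).le
        _ = heatKernel d t (x - w) * Real.exp (lam * ‖w‖) +
            heatKernel d t (y - w) * Real.exp (lam * ‖w‖) := by ring
        _ ≤ (2*π*t)^(-(d:ℝ)/2) * Real.exp (lam^2*t) *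
              (Real.exp (lam*‖x‖) * Real.exp (-(1/(4*t)) * ‖x - w‖^2)) +
            (2*π*t)^(-(d:ℝ)/2) * Real.exp (lam^2*t) *
              (Real.exp (lam*‖y‖) * Real.exp (-(1/(4*t)) * ‖y - w‖^2)) :=
            add_le_add (hker x w) (hker y w)
        _ = (2*π*t)^(-(d:ℝ)/2) * Real.exp (lam^2*t) *
              (Real.exp (lam*‖x‖) * Real.exp (-(1/(4*t)) * ‖x - w‖^2) +
               Real.exp (lam*‖y‖) * Real.exp (-(1/(4*t)) * ‖y - w‖^2)) := by ring
    have hintx := (gauss_shift_integrable hb4 x).const_mul (Real.exp (lam*‖x‖))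
    have hinty := (gauss_shift_integrable hb4 y).const_mul (Real.exp (lam*‖y‖))
    have hint : Integrable (fun w : EuclideanSpace ℝ (Fin d) =>
        (2*π*t)^(-(d:ℝ)/2) * Real.exp (lam^2*t) *
          (Real.exp (lam*‖x‖) * Real.exp (-(1/(4*t)) * ‖x - w‖^2) +
           Real.exp (lam*‖y‖) * Real.exp (-(1/(4*t)) * ‖y - w‖^2))) :=
      (hintx.add hinty).const_mul _
    have hEy : Real.exp (lam * ‖y‖) ≤ Real.exp (lam * ‖x‖ + 2 * lam * ‖x - y‖) := by
      apply Real.exp_le_exp.mpr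
      have hyx : ‖y‖ ≤ ‖x‖ + ‖x - y‖ := by simpa using norm_sub_le x (x - y)
      nlinarith [mul_le_mul_of_nonneg_left hyx hlam, mul_nonneg hlam hδ]
    calc (∫ w : EuclideanSpace ℝ (Fin d),
            |heatKernel d t (x - w) - heatKernel d t (y - w)| * Real.exp (lam * ‖w‖))
        ≤ ∫ w : EuclideanSpace ℝ (Fin d),
            (2*π*t)^(-(d:ℝ)/2) * Real.exp (lam^2*t) *
              (Real.exp (lam*‖x‖) * Real.exp (-(1/(4*t)) * ‖x - w‖^2) +
               Real.exp (lam*‖y‖) * Real.exp (-(1/(4*t)) * ‖y - w‖^2)) :=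
          integral_mono_of_nonneg (Filter.Eventually.of_forall fun w => by positivity) hint
            (Filter.Eventually.of_forall hpt)
      _ = (2*π*t)^(-(d:ℝ)/2) * Real.exp (lam^2*t) *
            (Real.exp (lam*‖x‖) * (π/(1/(4*t)))^((d:ℝ)/2) +
             Real.exp (lam*‖y‖) * (π/(1/(4*t)))^((d:ℝ)/2)) := by
          rw [integral_const_mul, integral_add hintx hinty, integral_const_mul,
            integral_const_mul, gauss_shift_integral hb4 x, gauss_shift_integral hb4 y]
      _ = ((2*π*t)^(-(d:ℝ)/2) * (π/(1/(4*t)))^((d:ℝ)/2)) * Real.exp (lam^2*t) *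
            (Real.exp (lam*‖x‖) + Real.exp (lam*‖y‖)) := by ring
      _ ≤ (6^d : ℝ) * Real.exp (lam^2*t) *
            (Real.exp (lam * ‖x‖ + 2 * lam * ‖x - y‖) +
             Real.exp (lam * ‖x‖ + 2 * lam * ‖x - y‖)) := by
          have hQ : (0:ℝ) ≤ π/(1/(4*t)) := by positivity
          have hQ36 : (π/(1/(4*t)))/(2*π*t) ≤ 36 := by
            have : (π/(1/(4*t)))/(2*π*t) = 2 := by field_simp; ring
            rw [this]; norm_num
          have hc6 := rpow_const_bound (d := d) ht hQ hQ36
          gcongr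
      _ = 2 * 6^d * Real.exp (lam^2*t) * Real.exp (lam * ‖x‖ + 2 * lam * ‖x - y‖) * 1 := by
          ring
      _ ≤ 3 * Real.exp 2 * 6^d * Real.exp (lam ^ 2 * t) *
            Real.exp (lam * ‖x‖ + 2 * lam * ‖x - y‖) * (t ^ (-(1 : ℝ) / 2) * ‖x - y‖) := by
          have h2e : (2:ℝ) ≤ 3 * Real.exp 2 := by
            nlinarith [Real.one_le_exp (by norm_num : (0:ℝ) ≤ 2)]
          have hmain : 2 * 6^d * Real.exp (lam^2*t) * Real.exp (lam * ‖x‖ + 2 * lam * ‖x - y‖)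
              ≤ 3 * Real.exp 2 * 6^d * Real.exp (lam ^ 2 * t) *
                Real.exp (lam * ‖x‖ + 2 * lam * ‖x - y‖) := by
            have := mul_le_mul_of_nonneg_right h2e
              (by positivity : (0:ℝ) ≤ 6^d * Real.exp (lam^2*t) *
                Real.exp (lam * ‖x‖ + 2 * lam * ‖x - y‖))
            calc 2 * 6^d * Real.exp (lam^2*t) * Real.exp (lam * ‖x‖ + 2 * lam * ‖x - y‖)
                = 2 * (6^d * Real.exp (lam^2*t) *
                    Real.exp (lam * ‖x‖ + 2 * lam * ‖x - y‖)) := by ring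
              _ ≤ 3 * Real.exp 2 * (6^d * Real.exp (lam^2*t) *
                    Real.exp (lam * ‖x‖ + 2 * lam * ‖x - y‖)) := this
              _ = 3 * Real.exp 2 * 6^d * Real.exp (lam ^ 2 * t) *
                    Real.exp (lam * ‖x‖ + 2 * lam * ‖x - y‖) := by ring
          exact mul_le_mul hmain hone (by norm_num) (by positivity)
      _ = 3 * Real.exp 2 * 6^d * Real.exp (lam ^ 2 * t) *
            Real.exp (lam * ‖x‖ + 2 * lam * ‖x - y‖) * t ^ (-(1 : ℝ) / 2) * ‖x - y‖ := by
          ring
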